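/- Let M : ℕ × ℕ → ℂ be an infinite matrix with δ := inf_k |M_{kk}| > 0 (in particular all diagonal entries are nonzero). Let G be the infinite matrix with entries G_{jk} = M_{jk}/M_{kk} for j ≠ k and G_{jj} = 0, and assume b₁ := sup_j ∑_k |G_{jk}| < 1 and b₂ := sup_k ∑_j |G_{jk}| < 1. Then: (a) G defines a bounded operator on ℓ²(ℕ) with ‖G‖ ≤ √(b₁ b₂) < 1, so that I + G is invertible in the bounded operators on ℓ²(ℕ); (b) the operator L x = (I + G)(D x), where D is the diagonal operator D x = (M_{kk} x_k)_k with domain Dom(D) = { x ∈ ℓ²(ℕ) : (M_{kk} x_k)_k ∈ ℓ²(ℕ) }, is a bijection from Dom(D) onto ℓ²(ℕ) whose inverse is a bounded operator of norm at most 1/(δ(1 − √(b₁ b₂))); (c) if in addition |M_{kk}| → ∞ as k → ∞, then this inverse is a compact operator on ℓ²(ℕ). -/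

import Mathlib

open Filter Topology
open scoped ENNReal

set_option maxHeartbeats 2000000

noncomputable section

/-- `M` defines the bounded operator `T` on `ℓ²(ℕ)`. -/
def RepresentsMatrix (M : ℕ → ℕ → ℂ)
    (T : lp (fun _ : ℕ => ℂ) 2 →L[ℂ] lp (fun _ : ℕ => ℂ) 2) : Prop :=
  ∀ (x : lp (fun _ : ℕ => ℂ) 2) (j : ℕ),
    Summable (fun k => ‖M j k * x k‖) ∧ T x j = ∑' k, M j k * x k

section Aux

private lemma toReal_two : (2 : ℝ≥0∞).toReal = 2 := by norm_num

private lemma rpow_toReal_two (a : ℝ) : a ^ (2 : ℝ≥0∞).toReal = a ^ (2 : ℕ) := by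
  rw [toReal_two, show ((2:ℝ) = ((2:ℕ):ℝ)) by norm_num, Real.rpow_natCast]

private lemma lp2_norm_sq (x : lp (fun _ : ℕ => ℂ) 2) :
    ‖x‖ ^ (2:ℕ) = ∑' k, ‖x k‖ ^ (2:ℕ) := by
  have := lp.norm_rpow_eq_tsum (p := 2) (by norm_num) x
  simpa [rpow_toReal_two] using this

private lemma lp2_summable_sq (x : lp (fun _ : ℕ => ℂ) 2) :
    Summable fun k => ‖x k‖ ^ (2:ℕ) := by
  have := (lp.memℓp x).summable (p := 2) (by norm_num)
  simpa [rpow_toReal_two] using this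

private lemma lp2_sum_sq_le (x : lp (fun _ : ℕ => ℂ) 2) (s : Finset ℕ) :
    ∑ k ∈ s, ‖x k‖ ^ (2:ℕ) ≤ ‖x‖ ^ (2:ℕ) := by
  have := lp.sum_rpow_le_norm_rpow (p := 2) (by norm_num) x s
  simpa [rpow_toReal_two] using this

private lemma memℓp_diag {c : ℕ → ℂ} {C : ℝ} (hC : ∀ k, ‖c k‖ ≤ C)
    (x : lp (fun _ : ℕ => ℂ) 2) : Memℓp (fun k => c k * x k) 2 := by
  have hC0 : 0 ≤ C := (norm_nonneg (c 0)).trans (hC 0)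
  refine memℓp_gen' (C := C ^ (2:ℕ) * ‖x‖ ^ (2:ℕ)) fun s => ?_
  calc ∑ k ∈ s, ‖c k * x k‖ ^ (2:ℝ≥0∞).toReal
      = ∑ k ∈ s, ‖c k * x k‖ ^ (2:ℕ) := by
        simp only [rpow_toReal_two]
    _ ≤ ∑ k ∈ s, C ^ (2:ℕ) * ‖x k‖ ^ (2:ℕ) := by
        refine Finset.sum_le_sum fun k _ => ?_
        rw [norm_mul, mul_pow]
        exact mul_le_mul_of_nonneg_right (pow_le_pow_left₀ (norm_nonneg _) (hC k) 2)
          (by positivity)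
    _ = C ^ (2:ℕ) * ∑ k ∈ s, ‖x k‖ ^ (2:ℕ) := by rw [Finset.mul_sum]
    _ ≤ C ^ (2:ℕ) * ‖x‖ ^ (2:ℕ) :=
        mul_le_mul_of_nonneg_left (lp2_sum_sq_le x s) (by positivity)

/-- Norm bound for an operator acting diagonally. -/
private lemma diag_norm_le {T : lp (fun _ : ℕ => ℂ) 2 →L[ℂ] lp (fun _ : ℕ => ℂ) 2}
    {c : ℕ → ℂ} {C : ℝ} (hC0 : 0 ≤ C) (hC : ∀ k, ‖c k‖ ≤ C)
    (hT : ∀ x k, T x k = c k * x k) : ‖T‖ ≤ C := by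
  refine ContinuousLinearMap.opNorm_le_bound _ hC0 fun x => ?_
  refine lp.norm_le_of_forall_sum_le (by norm_num) (by positivity) fun s => ?_
  calc ∑ k ∈ s, ‖(T x) k‖ ^ (2:ℝ≥0∞).toReal
      = ∑ k ∈ s, ‖c k * x k‖ ^ (2:ℕ) := by
        simp only [rpow_toReal_two, hT]
    _ ≤ ∑ k ∈ s, C ^ (2:ℕ) * ‖x k‖ ^ (2:ℕ) := by
        refine Finset.sum_le_sum fun k _ => ?_
        rw [norm_mul, mul_pow]
        exact mul_le_mul_of_nonneg_right (pow_le_pow_left₀ (norm_nonneg _) (hC k) 2)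
          (by positivity)
    _ = C ^ (2:ℕ) * ∑ k ∈ s, ‖x k‖ ^ (2:ℕ) := by rw [Finset.mul_sum]
    _ ≤ C ^ (2:ℕ) * ‖x‖ ^ (2:ℕ) :=
        mul_le_mul_of_nonneg_left (lp2_sum_sq_le x s) (by positivity)
    _ = (C * ‖x‖) ^ (2:ℝ≥0∞).toReal := by rw [rpow_toReal_two, mul_pow]

/-- The diagonal multiplication operator. -/
private def diagL (c : ℕ → ℂ) (C : ℝ) (hC : ∀ k, ‖c k‖ ≤ C) :
    lp (fun _ : ℕ => ℂ) 2 →L[ℂ] lp (fun _ : ℕ => ℂ) 2 :=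
  LinearMap.mkContinuous
    { toFun := fun x => (⟨fun k => c k * x k, memℓp_diag hC x⟩ : lp (fun _ : ℕ => ℂ) 2)
      map_add' := by
        intro x y
        ext k
        simp [mul_add]
        rfl
      map_smul' := by
        intro a x
        ext k
        simp
        ring }
    C (fun x => by
      have hC0 : 0 ≤ C := (norm_nonneg (c 0)).trans (hC 0)
      refine lp.norm_le_of_forall_sum_le (by norm_num)
        (mul_nonneg hC0 (norm_nonneg _)) fun s => ?_
      calc ∑ k ∈ s, ‖c k * x k‖ ^ (2:ℝ≥0∞).toReal
          = ∑ k ∈ s, ‖c k * x k‖ ^ (2:ℕ) := by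
            simp only [rpow_toReal_two]
        _ ≤ ∑ k ∈ s, C ^ (2:ℕ) * ‖x k‖ ^ (2:ℕ) := by
            refine Finset.sum_le_sum fun k _ => ?_
            rw [norm_mul, mul_pow]
            exact mul_le_mul_of_nonneg_right (pow_le_pow_left₀ (norm_nonneg _) (hC k) 2)
              (by positivity)
        _ = C ^ (2:ℕ) * ∑ k ∈ s, ‖x k‖ ^ (2:ℕ) := by rw [Finset.mul_sum]
        _ ≤ C ^ (2:ℕ) * ‖x‖ ^ (2:ℕ) :=
            mul_le_mul_of_nonneg_left (lp2_sum_sq_le x s) (by positivity)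
        _ = (C * ‖x‖) ^ (2:ℝ≥0∞).toReal := by rw [rpow_toReal_two, mul_pow])

private lemma diagL_apply (c : ℕ → ℂ) (C : ℝ) (hC : ∀ k, ‖c k‖ ≤ C)
    (x : lp (fun _ : ℕ => ℂ) 2) (k : ℕ) : diagL c C hC x k = c k * x k := rfl

private lemma diagL_norm_le (c : ℕ → ℂ) (C : ℝ) (hC : ∀ k, ‖c k‖ ≤ C) :
    ‖diagL c C hC‖ ≤ C :=
  diag_norm_le ((norm_nonneg (c 0)).trans (hC 0)) hC (fun _ _ => rfl)

private lemma compact_rankOne {E F : Type*} [NormedAddCommGroup E] [NormedSpace ℂ E]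
    [NormedAddCommGroup F] [NormedSpace ℂ F] (φ : E →L[ℂ] ℂ) (v : F) :
    IsCompactOperator fun x => φ x • v := by
  refine ⟨(fun c : ℂ => c • v) '' Metric.closedBall 0 1,
    (isCompact_closedBall 0 1).image (continuous_id.smul continuous_const), ?_⟩
  have h0 : φ ⁻¹' Metric.closedBall 0 1 ∈ 𝓝 (0 : E) := by
    refine φ.continuous.continuousAt.preimage_mem_nhds ?_
    simpa using Metric.closedBall_mem_nhds (0 : ℂ) one_pos
  exact Filter.mem_of_superset h0 fun x hx => ⟨φ x, hx, rfl⟩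

private lemma compact_finsum {E F : Type*} [NormedAddCommGroup E] [NormedSpace ℂ E]
    [NormedAddCommGroup F] [NormedSpace ℂ F] (s : Finset ℕ) (f : ℕ → E → F)
    (h : ∀ k, IsCompactOperator (f k)) :
    IsCompactOperator (fun x => ∑ k ∈ s, f k x) := by
  classical
  induction s using Finset.induction_on with
  | empty => simp only [Finset.sum_empty]; exact isCompactOperator_zero
  | insert _ _ hk ih =>
      simp only [Finset.sum_insert hk]
      exact (h _).add ih

/-- The evaluation functional on `ℓ²`. -/
private def evalL (k : ℕ) : lp (fun _ : ℕ => ℂ) 2 →L[ℂ] ℂ :=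
  LinearMap.mkContinuous
    { toFun := fun x => x k
      map_add' := by intro x y; simp
      map_smul' := by intro a x; simp }
    1 (fun x => by
      show ‖x k‖ ≤ 1 * ‖x‖; simpa using lp.norm_apply_le_norm (by norm_num) x k)

private lemma diag_compact {T : lp (fun _ : ℕ => ℂ) 2 →L[ℂ] lp (fun _ : ℕ => ℂ) 2}
    {c : ℕ → ℂ} (hT : ∀ x k, T x k = c k * x k)
    (hc : Tendsto (fun k => ‖c k‖) atTop (𝓝 0)) : IsCompactOperator ⇑T := by
  classical
  set v : ℕ → lp (fun _ : ℕ => ℂ) 2 := fun k => c k • lp.single 2 k (1:ℂ) with hv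
  set Tn : ℕ → lp (fun _ : ℕ => ℂ) 2 →L[ℂ] lp (fun _ : ℕ => ℂ) 2 :=
    fun n => ∑ k ∈ Finset.range n, (evalL k).smulRight (v k) with hTn
  have hTnapply : ∀ n x j, (Tn n) x j = (if j < n then c j * x j else 0) := by
    intro n x j
    have : (Tn n) x = ∑ k ∈ Finset.range n, (evalL k) x • v k := by
      simp [hTn, ContinuousLinearMap.sum_apply]
    rw [this, lp.coeFn_sum]
    simp only [Finset.sum_apply]
    have : ∀ k, ((evalL k) x • v k) j = x k • (c k * (if j = k then 1 else 0)) := by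
      intro k
      simp [hv, evalL, lp.coeFn_smul, lp.single_apply, Pi.single_apply, smul_eq_mul]
      split_ifs
      · rfl
      · rfl
    rw [Finset.sum_congr rfl fun k _ => this k]
    by_cases hj : j < n
    · rw [Finset.sum_eq_single j]
      · simp [hj]; ring
      · intro b _ hb; simp [Ne.symm hb]
      · intro hjn; exact absurd (Finset.mem_range.2 hj) hjn
    · rw [Finset.sum_eq_zero]
      · simp [hj]
      · intro b hb
        have : j ≠ b := by
          rintro rfl; exact hj (Finset.mem_range.1 hb)
        simp [this]
  have hcompact : ∀ n, IsCompactOperator ⇑(Tn n) := by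
    intro n
    have : ⇑(Tn n) = fun x => ∑ k ∈ Finset.range n, (evalL k) x • v k := by
      funext x
      simp [hTn, ContinuousLinearMap.sum_apply]
    rw [this]
    exact compact_finsum _ _ fun k => compact_rankOne (evalL k) (v k)
  refine isCompactOperator_of_tendsto (l := atTop) (F := Tn) ?_ (Eventually.of_forall hcompact)
  rw [Metric.tendsto_atTop]
  intro ε hε
  obtain ⟨N, hN⟩ := (Metric.tendsto_atTop.1 hc (ε/2) (by linarith))
  refine ⟨N, fun n hn => ?_⟩
  rw [dist_eq_norm]
  have hle : ‖Tn n - T‖ ≤ ε / 2 := by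
    refine diag_norm_le (c := fun k => if k < n then 0 else -c k) (by linarith) ?_ ?_
    · intro k
      by_cases hk : k < n
      · simp [hk]; linarith
      · simp only [hk, if_false, norm_neg]
        have := hN k (le_trans hn (not_lt.1 hk))
        rw [Real.dist_eq, sub_zero] at this
        exact le_of_lt (lt_of_abs_lt this)
    · intro x k
      rw [ContinuousLinearMap.sub_apply, lp.coeFn_sub, Pi.sub_apply, hTnapply, hT]
      by_cases hk : k < n <;> simp [hk] <;> ring
  linarith

end Aux

/-- Matrix form of Theorem 5.11 (Gershgorin-type invertibility). Let `M` have diagonal bounded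
below by `δ > 0`, and let `G = F D⁻¹` (entries `M_{jk}/M_{kk}` off diagonal, `0` on the
diagonal) have row `ℓ¹`-norms at most `b₁ < 1` and column `ℓ¹`-norms at most `b₂ < 1`. Then
(a) `G` defines a bounded operator `Gop` with `‖Gop‖ ≤ √(b₁ b₂) < 1`, so `I + Gop` is
invertible; (b) `L x = (I + Gop)(D x)` with domain `{x : (M_{kk} x_k)_k ∈ ℓ²}` is a bijection
onto `ℓ²(ℕ)` whose inverse `R` is bounded with `‖R‖ ≤ 1/(δ (1 − √(b₁ b₂)))`; and (c) if
moreover `|M_{kk}| → ∞`, then `R` is compact. -/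
theorem gershgorin_invertibility (M : ℕ → ℕ → ℂ)
    (δ : ℝ) (hδ : 0 < δ) (hdiag : ∀ k, δ ≤ ‖M k k‖)
    (G : ℕ → ℕ → ℂ) (hG : ∀ j k, G j k = if j = k then 0 else M j k / M k k)
    (b₁ b₂ : ℝ) (hb₁lt : b₁ < 1) (hb₂lt : b₂ < 1)
    (hGrow : ∀ j, Summable fun k => ‖G j k‖) (hb₁ : ∀ j, ∑' k, ‖G j k‖ ≤ b₁)
    (hGcol : ∀ k, Summable fun j => ‖G j k‖) (hb₂ : ∀ k, ∑' j, ‖G j k‖ ≤ b₂) :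
    -- (a) `G` defines a bounded operator of norm `≤ √(b₁ b₂) < 1` and `I + G` is invertible
    ∃ Gop : lp (fun _ : ℕ => ℂ) 2 →L[ℂ] lp (fun _ : ℕ => ℂ) 2,
      RepresentsMatrix G Gop ∧
      ‖Gop‖ ≤ Real.sqrt (b₁ * b₂) ∧ Real.sqrt (b₁ * b₂) < 1 ∧
      IsUnit (1 + Gop) ∧
      -- (b) `L = (I + Gop) ∘ D` is a bijection from `Dom(D)` onto `ℓ²(ℕ)` whose inverse `R`
      --     is bounded with `‖R‖ ≤ 1/(δ(1 − √(b₁ b₂)))`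
      ∃ R : lp (fun _ : ℕ => ℂ) 2 →L[ℂ] lp (fun _ : ℕ => ℂ) 2,
        (∀ (x : lp (fun _ : ℕ => ℂ) 2) (hx : Memℓp (fun k => M k k * x k) 2),
          R ((1 + Gop) (⟨fun k => M k k * x k, hx⟩ : lp (fun _ : ℕ => ℂ) 2)) = x) ∧
        (∀ y : lp (fun _ : ℕ => ℂ) 2, ∃ hx : Memℓp (fun k => M k k * (R y) k) 2,
          (1 + Gop) (⟨fun k => M k k * (R y) k, hx⟩ : lp (fun _ : ℕ => ℂ) 2) = y) ∧
        ‖R‖ ≤ 1 / (δ * (1 - Real.sqrt (b₁ * b₂))) ∧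
        -- (c) if `|M_{kk}| → ∞`, then `R` is a compact operator
        (Tendsto (fun k => ‖M k k‖) atTop atTop → IsCompactOperator ⇑R) := by
  classical
  have hb₁0 : 0 ≤ b₁ := (tsum_nonneg fun k => norm_nonneg _).trans (hb₁ 0)
  have hb₂0 : 0 ≤ b₂ := (tsum_nonneg fun j => norm_nonneg _).trans (hb₂ 0)
  set r := Real.sqrt (b₁ * b₂) with hrdef
  have hr0 : 0 ≤ r := Real.sqrt_nonneg _
  have hrsq : r ^ (2:ℕ) = b₁ * b₂ := Real.sq_sqrt (by positivity)
  have hr1 : r < 1 := by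
    rw [hrdef, show (1:ℝ) = Real.sqrt 1 by simp]
    exact Real.sqrt_lt_sqrt (by positivity) (by nlinarith)
  have hxk : ∀ (x : lp (fun _ : ℕ => ℂ) 2) k, ‖x k‖ ≤ ‖x‖ :=
    fun x k => lp.norm_apply_le_norm (by norm_num) x k
  have hsum : ∀ (x : lp (fun _ : ℕ => ℂ) 2) j, Summable fun k => ‖G j k‖ * ‖x k‖ :=
    fun x j => Summable.of_nonneg_of_le (fun k => by positivity)
      (fun k => mul_le_mul_of_nonneg_left (hxk x k) (norm_nonneg _))
      ((hGrow j).mul_right ‖x‖)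
  have hsum' : ∀ (x : lp (fun _ : ℕ => ℂ) 2) j, Summable fun k => ‖G j k * x k‖ := by
    intro x j; simpa [norm_mul] using hsum x j
  have hsumsq : ∀ (x : lp (fun _ : ℕ => ℂ) 2) j,
      Summable fun k => ‖G j k‖ * ‖x k‖ ^ (2:ℕ) :=
    fun x j => Summable.of_nonneg_of_le (fun k => by positivity)
      (fun k => mul_le_mul_of_nonneg_left
        (pow_le_pow_left₀ (norm_nonneg _) (hxk x k) 2) (norm_nonneg _))
      ((hGrow j).mul_right (‖x‖ ^ (2:ℕ)))
  set S : lp (fun _ : ℕ => ℂ) 2 → ℕ → ℝ :=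
    fun x j => ∑' k, ‖G j k‖ * ‖x k‖ ^ (2:ℕ) with hSdef
  have hS0 : ∀ x j, 0 ≤ S x j := fun x j => tsum_nonneg fun k => by positivity
  have key : ∀ (x : lp (fun _ : ℕ => ℂ) 2) j,
      (∑' k, ‖G j k‖ * ‖x k‖) ^ (2:ℕ) ≤ b₁ * S x j := by
    intro x j
    have hstep : ∀ s : Finset ℕ, ∑ k ∈ s, ‖G j k‖ * ‖x k‖ ≤ Real.sqrt (b₁ * S x j) := by
      intro s
      have hcs := Finset.sum_sq_le_sum_mul_sum_of_sq_eq_mul s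
        (r := fun k => ‖G j k‖ * ‖x k‖) (f := fun k => ‖G j k‖)
        (g := fun k => ‖G j k‖ * ‖x k‖ ^ (2:ℕ))
        (fun k _ => norm_nonneg _) (fun k _ => by positivity) (fun k _ => by ring)
      have h1 : ∑ k ∈ s, ‖G j k‖ ≤ b₁ :=
        le_trans (Summable.sum_le_tsum s (fun k _ => norm_nonneg _) (hGrow j)) (hb₁ j)
      have h2 : ∑ k ∈ s, ‖G j k‖ * ‖x k‖ ^ (2:ℕ) ≤ S x j :=
        Summable.sum_le_tsum s (fun k _ => by positivity) (hsumsq x j)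
      have hle : (∑ k ∈ s, ‖G j k‖ * ‖x k‖) ^ (2:ℕ) ≤ b₁ * S x j :=
        le_trans hcs (mul_le_mul h1 h2 (Finset.sum_nonneg fun k _ => by positivity) hb₁0)
      have hnn : 0 ≤ ∑ k ∈ s, ‖G j k‖ * ‖x k‖ :=
        Finset.sum_nonneg fun k _ => by positivity
      exact (Real.le_sqrt hnn (mul_nonneg hb₁0 (hS0 x j))).2 hle
    have htsle := Summable.tsum_le_of_sum_le (hsum x j) hstep
    calc (∑' k, ‖G j k‖ * ‖x k‖) ^ (2:ℕ)
        ≤ (Real.sqrt (b₁ * S x j)) ^ (2:ℕ) :=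
          pow_le_pow_left₀ (tsum_nonneg fun k => by positivity) htsle 2
      _ = b₁ * S x j := Real.sq_sqrt (mul_nonneg hb₁0 (hS0 x j))
  have hcol : ∀ (x : lp (fun _ : ℕ => ℂ) 2) (s : Finset ℕ),
      ∑ j ∈ s, S x j ≤ b₂ * ‖x‖ ^ (2:ℕ) := by
    intro x s
    have h1 : ∑ j ∈ s, S x j = ∑' k, ∑ j ∈ s, ‖G j k‖ * ‖x k‖ ^ (2:ℕ) :=
      (Summable.tsum_finsetSum fun j _ => hsumsq x j).symm
    rw [h1]
    calc ∑' k, ∑ j ∈ s, ‖G j k‖ * ‖x k‖ ^ (2:ℕ)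
        ≤ ∑' k, b₂ * ‖x k‖ ^ (2:ℕ) := by
          refine Summable.tsum_le_tsum (fun k => ?_) (summable_sum fun j _ => hsumsq x j)
            ((lp2_summable_sq x).mul_left b₂)
          rw [← Finset.sum_mul]
          exact mul_le_mul_of_nonneg_right
            (le_trans (Summable.sum_le_tsum s (fun j _ => norm_nonneg _) (hGcol k)) (hb₂ k))
            (by positivity)
      _ = b₂ * ∑' k, ‖x k‖ ^ (2:ℕ) := tsum_mul_left
      _ = b₂ * ‖x‖ ^ (2:ℕ) := by rw [← lp2_norm_sq]
  have hsq_bound : ∀ (x : lp (fun _ : ℕ => ℂ) 2) (s : Finset ℕ),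
      ∑ j ∈ s, ‖∑' k, G j k * x k‖ ^ (2:ℝ≥0∞).toReal ≤ b₁ * (b₂ * ‖x‖ ^ (2:ℕ)) := by
    intro x s
    calc ∑ j ∈ s, ‖∑' k, G j k * x k‖ ^ (2:ℝ≥0∞).toReal
        = ∑ j ∈ s, ‖∑' k, G j k * x k‖ ^ (2:ℕ) := by simp only [rpow_toReal_two]
      _ ≤ ∑ j ∈ s, b₁ * S x j := by
          refine Finset.sum_le_sum fun j _ => ?_
          refine le_trans (pow_le_pow_left₀ (norm_nonneg _)
            (norm_tsum_le_tsum_norm (hsum' x j)) 2) ?_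
          have hnm : (∑' k, ‖G j k * x k‖) = ∑' k, ‖G j k‖ * ‖x k‖ := by
            simp [norm_mul]
          rw [hnm]
          exact key x j
      _ = b₁ * ∑ j ∈ s, S x j := by rw [Finset.mul_sum]
      _ ≤ b₁ * (b₂ * ‖x‖ ^ (2:ℕ)) := mul_le_mul_of_nonneg_left (hcol x s) hb₁0
  have hGmem : ∀ x : lp (fun _ : ℕ => ℂ) 2, Memℓp (fun j => ∑' k, G j k * x k) 2 :=
    fun x => memℓp_gen' (C := b₁ * (b₂ * ‖x‖ ^ (2:ℕ))) (hsq_bound x)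
  set Gop : lp (fun _ : ℕ => ℂ) 2 →L[ℂ] lp (fun _ : ℕ => ℂ) 2 :=
    LinearMap.mkContinuous
      { toFun := fun x => (⟨fun j => ∑' k, G j k * x k, hGmem x⟩ : lp (fun _ : ℕ => ℂ) 2)
        map_add' := by
          intro x y
          ext j
          have hx : Summable fun k => G j k * x k := (hsum' x j).of_norm
          have hy : Summable fun k => G j k * y k := (hsum' y j).of_norm
          have : (fun k => G j k * (x + y) k) = fun k => G j k * x k + G j k * y k := by
            funext k
            simp [lp.coeFn_add, mul_add]
          show ∑' k, G j k * (x + y) k = _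
          rw [this, Summable.tsum_add hx hy]
          rfl
        map_smul' := by
          intro a x
          ext j
          have : (fun k => G j k * (a • x) k) = fun k => a * (G j k * x k) := by
            funext k
            simp [lp.coeFn_smul]
            ring
          show ∑' k, G j k * (a • x) k = _
          rw [this, tsum_mul_left]
          rfl }
      r (fun x => by
        refine lp.norm_le_of_forall_sum_le (by norm_num)
          (mul_nonneg hr0 (norm_nonneg _)) fun s => ?_
        refine le_trans (hsq_bound x s) (le_of_eq ?_)
        rw [rpow_toReal_two, mul_pow, hrsq]
        ring) with hGopdef
  have hGopapply : ∀ (x : lp (fun _ : ℕ => ℂ) 2) j, Gop x j = ∑' k, G j k * x k :=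
    fun x j => rfl
  have hGopnorm : ‖Gop‖ ≤ r := LinearMap.mkContinuous_norm_le _ hr0 _
  have hUnorm : ‖-Gop‖ < 1 := by rw [norm_neg]; exact lt_of_le_of_lt hGopnorm hr1
  set U : (lp (fun _ : ℕ => ℂ) 2 →L[ℂ] lp (fun _ : ℕ => ℂ) 2)ˣ :=
    Units.oneSub (-Gop) hUnorm with hUdef
  have hUval : (U : lp (fun _ : ℕ => ℂ) 2 →L[ℂ] lp (fun _ : ℕ => ℂ) 2) = 1 + Gop := by
    rw [hUdef]
    show 1 - (-Gop) = 1 + Gop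
    rw [sub_neg_eq_add]
  have hunit : IsUnit (1 + Gop) := by rw [← hUval]; exact U.isUnit
  have hMne : ∀ k, M k k ≠ 0 := fun k =>
    norm_pos_iff.1 (lt_of_lt_of_le hδ (hdiag k))
  have hδinv : ∀ k, ‖(M k k)⁻¹‖ ≤ δ⁻¹ := fun k => by
    rw [norm_inv]
    exact inv_anti₀ hδ (hdiag k)
  set Dinv := diagL (fun k => (M k k)⁻¹) δ⁻¹ hδinv with hDdef
  set Q : lp (fun _ : ℕ => ℂ) 2 →L[ℂ] lp (fun _ : ℕ => ℂ) 2 := ↑U⁻¹ with hQdef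
  have hQnorm : ‖Q‖ ≤ (1 - r)⁻¹ := by
    have h1 : ‖(1 : lp (fun _ : ℕ => ℂ) 2 →L[ℂ] lp (fun _ : ℕ => ℂ) 2)‖ ≤ 1 := by
      rw [ContinuousLinearMap.one_def]
      exact ContinuousLinearMap.norm_id_le
    have h2 : ‖Q‖ ≤ ‖(1 : lp (fun _ : ℕ => ℂ) 2 →L[ℂ] lp (fun _ : ℕ => ℂ) 2)‖ - 1
        + (1 - ‖-Gop‖)⁻¹ := tsum_geometric_le_of_norm_lt_one _ hUnorm
    have h3 : (1 - ‖-Gop‖)⁻¹ ≤ (1 - r)⁻¹ := by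
      refine inv_anti₀ (by linarith) ?_
      rw [norm_neg]
      linarith [hGopnorm]
    linarith
  refine ⟨Gop, fun x j => ⟨hsum' x j, hGopapply x j⟩, hGopnorm, hr1, hunit,
    Dinv.comp Q, ?_, ?_, ?_, ?_⟩
  · intro x hx
    set z : lp (fun _ : ℕ => ℂ) 2 := ⟨fun k => M k k * x k, hx⟩ with hzdef
    have h1 : Q ((1 + Gop) z) = z := by
      rw [← hUval]
      calc Q ((U : lp (fun _ : ℕ => ℂ) 2 →L[ℂ] lp (fun _ : ℕ => ℂ) 2) z)
          = ((↑U⁻¹ * ↑U : lp (fun _ : ℕ => ℂ) 2 →L[ℂ] lp (fun _ : ℕ => ℂ) 2)) z := rfl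
        _ = (1 : lp (fun _ : ℕ => ℂ) 2 →L[ℂ] lp (fun _ : ℕ => ℂ) 2) z := by rw [U.inv_mul]
        _ = z := rfl
    show Dinv (Q ((1 + Gop) z)) = x
    rw [h1]
    ext k
    show (M k k)⁻¹ * (M k k * x k) = x k
    exact inv_mul_cancel_left₀ (hMne k) _
  · intro y
    have hfun : (fun k => M k k * ((Dinv.comp Q) y) k) = ⇑(Q y) := by
      funext k
      show M k k * ((M k k)⁻¹ * (Q y) k) = (Q y) k
      exact mul_inv_cancel_left₀ (hMne k) _
    refine ⟨hfun ▸ lp.memℓp (Q y), ?_⟩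
    have heq : (⟨fun k => M k k * ((Dinv.comp Q) y) k, hfun ▸ lp.memℓp (Q y)⟩ :
        lp (fun _ : ℕ => ℂ) 2) = Q y := by
      ext k
      exact congrFun hfun k
    rw [heq, ← hUval]
    calc (U : lp (fun _ : ℕ => ℂ) 2 →L[ℂ] lp (fun _ : ℕ => ℂ) 2) (Q y)
        = ((↑U * ↑U⁻¹ : lp (fun _ : ℕ => ℂ) 2 →L[ℂ] lp (fun _ : ℕ => ℂ) 2)) y := rfl
      _ = (1 : lp (fun _ : ℕ => ℂ) 2 →L[ℂ] lp (fun _ : ℕ => ℂ) 2) y := by rw [U.mul_inv]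
      _ = y := rfl
  · calc ‖Dinv.comp Q‖ ≤ ‖Dinv‖ * ‖Q‖ := ContinuousLinearMap.opNorm_comp_le _ _
      _ ≤ δ⁻¹ * (1 - r)⁻¹ := by
          refine mul_le_mul (diagL_norm_le _ _ _) hQnorm (norm_nonneg _) (by positivity)
      _ = 1 / (δ * (1 - r)) := by rw [one_div, mul_inv]
  · intro htend
    have hc : Tendsto (fun k => ‖(M k k)⁻¹‖) atTop (𝓝 0) := by
      simp only [norm_inv]
      exact htend.inv_tendsto_atTop
    have hDc : IsCompactOperator ⇑Dinv := diag_compact (fun x k => rfl) hc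
    exact hDc.comp_clm Q
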